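/- Let X be a set and K : X × X → ℂ a bounded function such that for all finitely many pairwise distinct points x₁, …, xₙ ∈ X the functions K(x₁,·), …, K(xₙ,·) are linearly independent. Then the following are equivalent: (i) K satisfies condition (A3); (ii) for every sequence (c⁽ⁿ⁾)_{n∈ℕ} of finitely supported functions X → ℂ which is Cauchy with respect to the ℓ¹ norm ‖c‖₁ := ∑_{t∈X} |c_t| and which satisfies lim_{n→∞} ∑_{t∈X} c⁽ⁿ⁾_t K(t, x) = 0 for every x ∈ X, one has lim_{n→∞} ‖c⁽ⁿ⁾‖₁ = 0. -/

import Mathlib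

open Filter Topology

/-- Condition (A3): for every injective sequence of points and every absolutely
summable coefficient sequence, vanishing of the series `∑ c_j K(x_j, ·)` forces
all coefficients to vanish. -/
def CondA3 {X : Type*} (K : X → X → ℂ) : Prop :=
  ∀ x : ℕ → X, Function.Injective x → ∀ c : ℕ → ℂ,
    Summable (fun j => ‖c j‖) →
    (∀ t : X, ∑' j, c j * K (x j) t = 0) → ∀ j, c j = 0

theorem stmt_0 {X : Type*} (K : X → X → ℂ)
    (M : ℝ) (hK : ∀ s t, ‖K s t‖ ≤ M)
    (hli : ∀ (n : ℕ) (x : Fin n → X), Function.Injective x →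
      LinearIndependent ℂ (fun j : Fin n => fun t : X => K (x j) t)) :
    CondA3 K ↔
      ∀ c : ℕ → (X →₀ ℂ),
        (∀ ε > 0, ∃ N, ∀ m ≥ N, ∀ n ≥ N,
          ∑ t ∈ (c m - c n).support, ‖(c m - c n) t‖ < ε) →
        (∀ x : X,
          Tendsto (fun n => ∑ t ∈ (c n).support, (c n) t * K t x) atTop (nhds 0)) →
        Tendsto (fun n => ∑ t ∈ (c n).support, ‖(c n) t‖) atTop (nhds 0) := by
  classical
  constructor
  · -- (A3) → norm consistency
    intro hA3 c hCauchy hPt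
    -- summability facts
    have hsummn : ∀ n, Summable (fun t => ‖(c n) t‖) := by
      intro n
      refine summable_of_ne_finset_zero (s := (c n).support) (fun t ht => ?_)
      rw [Finsupp.notMem_support_iff.mp ht, norm_zero]
    have hsubsum : ∀ m n, Summable (fun t => ‖(c m) t - (c n) t‖) := by
      intro m n
      refine summable_of_ne_finset_zero (s := (c m - c n).support) (fun t ht => ?_)
      have h0 : (c m - c n) t = 0 := Finsupp.notMem_support_iff.mp ht
      rw [Finsupp.sub_apply] at h0
      rw [h0, norm_zero]
    -- Cauchy condition in tsum form
    have hCa' : ∀ ε > 0, ∃ N, ∀ m ≥ N, ∀ n ≥ N,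
        ∑' t, ‖(c m) t - (c n) t‖ < ε := by
      intro ε hε
      obtain ⟨N, hN⟩ := hCauchy ε hε
      refine ⟨N, fun m hm n hn => ?_⟩
      have heq : ∑' t, ‖(c m) t - (c n) t‖
          = ∑ t ∈ (c m - c n).support, ‖(c m - c n) t‖ := by
        rw [tsum_eq_sum (s := (c m - c n).support) (fun t ht => ?_)]
        · exact Finset.sum_congr rfl (fun t _ => by rw [Finsupp.sub_apply])
        · have h0 : (c m - c n) t = 0 := Finsupp.notMem_support_iff.mp ht
          rw [Finsupp.sub_apply] at h0
          rw [h0, norm_zero]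
      rw [heq]
      exact hN m hm n hn
    -- pointwise limit g
    have hptC : ∀ t : X, ∃ l, Tendsto (fun n => (c n) t) atTop (𝓝 l) := by
      intro t
      have : CauchySeq (fun n => (c n) t) := by
        rw [Metric.cauchySeq_iff]
        intro ε hε
        obtain ⟨N, hN⟩ := hCa' ε hε
        refine ⟨N, fun m hm n hn => ?_⟩
        have h1 : ‖(c m) t - (c n) t‖
            ≤ ∑' s, ‖(c m) s - (c n) s‖ :=
          Summable.le_tsum (hsubsum m n) t (fun _ _ => norm_nonneg _)
        calc dist ((c m) t) ((c n) t) = ‖(c m) t - (c n) t‖ := dist_eq_norm _ _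
          _ ≤ _ := h1
          _ < ε := hN m hm n hn
      exact cauchySeq_tendsto_of_complete this
    choose g hg using hptC
    -- key uniform estimate
    have key : ∀ ε > 0, ∃ N, ∀ n ≥ N, ∀ s : Finset X,
        ∑ t ∈ s, ‖g t - (c n) t‖ ≤ ε := by
      intro ε hε
      obtain ⟨N, hN⟩ := hCa' ε hε
      refine ⟨N, fun n hn s => ?_⟩
      have hlim : Tendsto (fun m => ∑ t ∈ s, ‖(c m) t - (c n) t‖) atTop
          (𝓝 (∑ t ∈ s, ‖g t - (c n) t‖)) := by
        refine tendsto_finset_sum _ (fun t _ => ?_)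
        exact (continuous_norm.tendsto _).comp ((hg t).sub tendsto_const_nhds)
      refine le_of_tendsto hlim (eventually_atTop.2 ⟨N, fun m hm => ?_⟩)
      calc ∑ t ∈ s, ‖(c m) t - (c n) t‖
          ≤ ∑' t, ‖(c m) t - (c n) t‖ :=
            Summable.sum_le_tsum s (fun _ _ => norm_nonneg _) (hsubsum m n)
        _ ≤ ε := (hN m hm n hn).le
    -- D n → 0
    have hD0 : Tendsto (fun n => ∑' t, ‖g t - (c n) t‖) atTop (𝓝 0) := by
      rw [Metric.tendsto_atTop]
      intro ε hε
      obtain ⟨N, hN⟩ := key (ε / 2) (half_pos hε)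
      refine ⟨N, fun n hn => ?_⟩
      have hsum : Summable (fun t => ‖g t - (c n) t‖) :=
        summable_of_sum_le (fun t => norm_nonneg _) (hN n hn)
      have hle : (∑' t, ‖g t - (c n) t‖) ≤ ε / 2 :=
        Summable.tsum_le_of_sum_le hsum (hN n hn)
      have hnn : (0:ℝ) ≤ ∑' t, ‖g t - (c n) t‖ :=
        tsum_nonneg (fun _ => norm_nonneg _)
      rw [Real.dist_eq, sub_zero, abs_of_nonneg hnn]
      linarith
    -- summability of g
    obtain ⟨N1, hN1⟩ := key 1 one_pos
    have hgsub1 : Summable (fun t => ‖g t - (c N1) t‖) :=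
      summable_of_sum_le (fun t => norm_nonneg _) (hN1 N1 le_rfl)
    have hgabs : Summable (fun t => ‖g t‖) := by
      refine Summable.of_nonneg_of_le (fun t => norm_nonneg _) (fun t => ?_)
        (hgsub1.add (hsummn N1))
      calc ‖g t‖ = ‖(g t - (c N1) t) + (c N1) t‖ := by ring_nf
        _ ≤ _ := norm_add_le _ _
    have hgS : Summable g := by
      apply Summable.of_norm
      simpa using hgabs
    -- summability of products
    have hsummK : ∀ (h : X → ℂ), Summable (fun t => ‖h t‖) → ∀ x,
        Summable (fun t => h t * K t x) := by
      intro h hh x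
      apply Summable.of_norm
      refine Summable.of_nonneg_of_le (fun t => norm_nonneg _) (fun t => ?_) (hh.mul_right M)
      rw [norm_mul]
      exact mul_le_mul_of_nonneg_left (hK t x) (norm_nonneg _)
    -- pointwise: ∑' g t * K t x = 0
    have hgK : ∀ x, ∑' t, g t * K t x = 0 := by
      intro x
      have h0 : Tendsto (fun n => ∑' t, (c n) t * K t x) atTop (𝓝 0) := by
        have heq : ∀ n, (∑' t, (c n) t * K t x)
            = ∑ t ∈ (c n).support, (c n) t * K t x := by
          intro n
          exact tsum_eq_sum (fun t ht => by
            rw [Finsupp.notMem_support_iff.mp ht, zero_mul])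
        simpa only [heq] using hPt x
      have h1 : Tendsto (fun n => ∑' t, (c n) t * K t x) atTop
          (𝓝 (∑' t, g t * K t x)) := by
        rw [tendsto_iff_norm_sub_tendsto_zero]
        refine squeeze_zero' (g := fun n => M * ∑' t, ‖g t - (c n) t‖)
          (Eventually.of_forall (fun n => norm_nonneg _)) ?_ ?_
        · obtain ⟨N, hN⟩ := key 1 one_pos
          refine eventually_atTop.2 ⟨N, fun n hn => ?_⟩
          have hsub : Summable (fun t => ‖g t - (c n) t‖) :=
            summable_of_sum_le (fun t => norm_nonneg _) (hN n hn)
          have e1 : (∑' t, (c n) t * K t x) - ∑' t, g t * K t x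
              = ∑' t, ((c n) t - g t) * K t x := by
            rw [← Summable.tsum_sub (hsummK _ (hsummn n) x) (hsummK _ hgabs x)]
            exact tsum_congr (fun t => by ring)
          have hsubn : Summable (fun t => ‖((c n) t - g t) * K t x‖) := by
            refine Summable.of_nonneg_of_le (fun t => norm_nonneg _) (fun t => ?_)
              (hsub.mul_right M)
            rw [norm_mul, norm_sub_rev]
            exact mul_le_mul_of_nonneg_left (hK t x) (norm_nonneg _)
          rw [e1]
          calc ‖∑' t, ((c n) t - g t) * K t x‖
              ≤ ∑' t, ‖((c n) t - g t) * K t x‖ := norm_tsum_le_tsum_norm hsubn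
            _ ≤ ∑' t, ‖g t - (c n) t‖ * M := by
                refine Summable.tsum_le_tsum (fun t => ?_) hsubn (hsub.mul_right M)
                rw [norm_mul, norm_sub_rev]
                exact mul_le_mul_of_nonneg_left (hK t x) (norm_nonneg _)
            _ = M * ∑' t, ‖g t - (c n) t‖ := by
                rw [tsum_mul_right, mul_comm]
        · have := hD0.const_mul M
          simpa using this
      exact tendsto_nhds_unique h1 h0
    -- g = 0
    have hg0 : ∀ t, g t = 0 := by
      have hcnt : (Function.support g).Countable := hgS.countable_support
      by_cases hfin : (Function.support g).Finite
      · -- finite support : use linear independence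
        set s := hfin.toFinset with hs
        have hmem : ∀ t, t ∈ s ↔ g t ≠ 0 := by
          intro t; rw [hs, Set.Finite.mem_toFinset, Function.mem_support]
        have hsum_s : ∀ x, ∑ t ∈ s, g t * K t x = 0 := by
          intro x
          rw [← hgK x]
          refine (tsum_eq_sum (fun t ht => ?_)).symm
          have : g t = 0 := by
            by_contra hgt
            exact ht ((hmem t).2 hgt)
          rw [this, zero_mul]
        let e := s.equivFin
        have hinj : Function.Injective (fun j : Fin s.card => ((e.symm j : s) : X)) :=
          Subtype.coe_injective.comp e.symm.injective
        have hLI := hli s.card _ hinj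
        rw [Fintype.linearIndependent_iff] at hLI
        have hz := hLI (fun j => g ((e.symm j : s) : X)) ?_
        · intro t
          by_contra hgt
          have ht : t ∈ s := (hmem t).2 hgt
          have := hz (e ⟨t, ht⟩)
          simp at this
          exact hgt this
        · funext x
          have h1 : (∑ j : Fin s.card, g ((e.symm j : s) : X) •
              (fun t : X => K (((e.symm j : s) : X)) t)) x
              = ∑ j : Fin s.card, g ((e.symm j : s) : X) * K (((e.symm j : s) : X)) x := by
            rw [Finset.sum_apply]
            rfl
          rw [h1]
          have h2 : ∑ j : Fin s.card, g ((e.symm j : s) : X) * K (((e.symm j : s) : X)) x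
              = ∑ t : s, g (t : X) * K (t : X) x :=
            Equiv.sum_comp e.symm (fun t : s => g (t : X) * K (t : X) x)
          rw [h2, Finset.sum_coe_sort s (fun t => g t * K t x), hsum_s x]
          rfl
      · -- infinite support : use (A3)
        have hinf : (Function.support g).Infinite := hfin
        haveI := hcnt.to_subtype
        haveI := hinf.to_subtype
        obtain ⟨d⟩ := nonempty_denumerable (Function.support g)
        letI := d
        let e := Denumerable.eqv (Function.support g)
        let x : ℕ → X := fun j => ((e.symm j : Function.support g) : X)
        have hinj : Function.Injective x :=
          Subtype.coe_injective.comp e.symm.injective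
        have hzz := hA3 x hinj (fun j => g (x j))
          ((hgabs.comp_injective hinj)) ?_
        · intro t
          by_contra hgt
          have ht : t ∈ Function.support g := hgt
          have := hzz (e ⟨t, ht⟩)
          have h' : g t = 0 := by simpa [x] using this
          exact hgt h'
        · intro y
          have e1 : ∑' j, g (x j) * K (x j) y
              = ∑' (t : Function.support g), g (t : X) * K (t : X) y :=
            Equiv.tsum_eq e.symm (fun t : Function.support g => g (t : X) * K (t : X) y)
          rw [e1, ← hgK y]
          refine tsum_subtype_eq_of_support_subset
            (f := fun t => g t * K t y) (s := Function.support g) (fun t ht => ?_)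
          simp only [Function.mem_support] at ht ⊢
          intro h0
          exact ht (by rw [h0, zero_mul])
    -- conclude
    have final : Tendsto (fun n => ∑' t, ‖(c n) t‖) atTop (𝓝 0) := by
      have heq : (fun n => ∑' t, ‖(c n) t‖)
          = fun n => ∑' t, ‖g t - (c n) t‖ := by
        funext n
        refine tsum_congr (fun t => ?_)
        rw [hg0 t, zero_sub, norm_neg]
      rw [heq]
      exact hD0
    have heq2 : (fun n => ∑ t ∈ (c n).support, ‖(c n) t‖)
        = fun n => ∑' t, ‖(c n) t‖ := by
      funext n
      exact (tsum_eq_sum (fun t ht => by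
        rw [Finsupp.notMem_support_iff.mp ht, norm_zero])).symm
    rw [heq2]
    exact final
  · -- norm consistency → (A3)
    intro hNCP x hx c hc hsum j
    set e : ℕ ↪ X := ⟨x, hx⟩ with he
    set P : ℕ → (ℕ →₀ ℂ) := fun n => ∑ j ∈ Finset.range n, Finsupp.single j (c j) with hP
    have hPapp : ∀ n k, (P n) k = if k ∈ Finset.range n then c k else 0 := by
      intro n k
      rw [hP]
      simp only [Finsupp.finset_sum_apply, Finsupp.single_apply]
      exact Finset.sum_ite_eq' (Finset.range n) k c
    have hsupP : ∀ n, (P n).support ⊆ Finset.range n := by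
      intro n
      refine Finsupp.support_subset_iff.2 (fun k hk => ?_)
      rw [hPapp]
      split_ifs with h
      · exact absurd h hk
      · rfl
    set C : ℕ → (X →₀ ℂ) := fun n => Finsupp.embDomain e (P n) with hC
    -- ℓ¹ norm of C n
    have hnorm : ∀ n, ∑ t ∈ (C n).support, ‖(C n) t‖
        = ∑ j ∈ Finset.range n, ‖c j‖ := by
      intro n
      have h1 : ∑ t ∈ (C n).support, ‖(C n) t‖
          = (C n).sum (fun _ v => ‖v‖) := rfl
      rw [h1, hC]
      rw [Finsupp.sum_embDomain]
      rw [Finsupp.sum_of_support_subset _ (hsupP n) _ (fun i _ => norm_zero)]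
      refine Finset.sum_congr rfl (fun k hk => ?_)
      rw [hPapp, if_pos hk]
    -- K-sums of C n
    have hKsum : ∀ n x', ∑ t ∈ (C n).support, (C n) t * K t x'
        = ∑ j ∈ Finset.range n, c j * K (x j) x' := by
      intro n x'
      have h1 : ∑ t ∈ (C n).support, (C n) t * K t x'
          = (C n).sum (fun t v => v * K t x') := rfl
      rw [h1, hC]
      rw [Finsupp.sum_embDomain]
      rw [Finsupp.sum_of_support_subset (P n) (hsupP n)
        (fun a b => b * K (e a) x') (fun i _ => zero_mul _)]
      refine Finset.sum_congr rfl (fun k hk => ?_)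
      rw [hPapp, if_pos hk]
      rfl
    -- Cauchy property of C
    have hCsub : ∀ m n, C m - C n = Finsupp.embDomain e (P m - P n) := by
      intro m n
      rw [hC]
      exact (map_sub (Finsupp.embDomain.addMonoidHom e) (P m) (P n)).symm
    have hCauchyC : ∀ ε > 0, ∃ N, ∀ m ≥ N, ∀ n ≥ N,
        ∑ t ∈ (C m - C n).support, ‖(C m - C n) t‖ < ε := by
      intro ε hε
      obtain ⟨s, hs⟩ := summable_iff_vanishing.mp hc (Set.Iio ε) (Iio_mem_nhds hε)
      refine ⟨s.sup id + 1, fun m hm n hn => ?_⟩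
      have hsub : ∀ q ≥ s.sup id + 1, s ⊆ Finset.range q := by
        intro q hq k hk
        rw [Finset.mem_range]
        calc k = id k := rfl
          _ ≤ s.sup id := Finset.le_sup hk
          _ < q := by omega
      have hdisj : Disjoint (P m - P n).support s := by
        rw [Finset.disjoint_left]
        intro k hk hks
        have h0 : (P m - P n) k = 0 := by
          rw [Finsupp.sub_apply, hPapp, hPapp,
            if_pos (hsub m hm hks), if_pos (hsub n hn hks), sub_self]
        exact Finsupp.mem_support_iff.mp hk h0
      have hterm : ∀ k, ‖(P m - P n) k‖ ≤ ‖c k‖ := by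
        intro k
        rw [Finsupp.sub_apply, hPapp, hPapp]
        split_ifs <;> simp
      have heq : ∑ t ∈ (C m - C n).support, ‖(C m - C n) t‖
          = ∑ k ∈ (P m - P n).support, ‖(P m - P n) k‖ := by
        rw [hCsub m n]
        have h1 : ∑ t ∈ (Finsupp.embDomain e (P m - P n)).support,
            ‖(Finsupp.embDomain e (P m - P n)) t‖
            = (Finsupp.embDomain e (P m - P n)).sum (fun _ v => ‖v‖) := rfl
        rw [h1, Finsupp.sum_embDomain]
        rfl
      rw [heq]
      calc ∑ k ∈ (P m - P n).support, ‖(P m - P n) k‖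
          ≤ ∑ k ∈ (P m - P n).support, ‖c k‖ :=
            Finset.sum_le_sum (fun k _ => hterm k)
        _ < ε := hs _ hdisj
    -- pointwise property of C
    have hPtC : ∀ x' : X,
        Tendsto (fun n => ∑ t ∈ (C n).support, (C n) t * K t x') atTop (𝓝 0) := by
      intro x'
      have hsummable : Summable (fun j => c j * K (x j) x') := by
        apply Summable.of_norm
        refine Summable.of_nonneg_of_le (fun t => norm_nonneg _) (fun t => ?_)
          (hc.mul_right M)
        rw [norm_mul]
        exact mul_le_mul_of_nonneg_left (hK (x t) x') (norm_nonneg _)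
      have h1 := hsummable.hasSum.tendsto_sum_nat
      rw [hsum x'] at h1
      have heq : (fun n => ∑ t ∈ (C n).support, (C n) t * K t x')
          = fun n => ∑ j ∈ Finset.range n, c j * K (x j) x' :=
        funext (fun n => hKsum n x')
      rw [heq]
      exact h1
    -- apply norm consistency
    have hconc := hNCP C hCauchyC hPtC
    have heq : (fun n => ∑ t ∈ (C n).support, ‖(C n) t‖)
        = fun n => ∑ j ∈ Finset.range n, ‖c j‖ := funext hnorm
    rw [heq] at hconc
    have h2 := hc.hasSum.tendsto_sum_nat
    have h3 : ∑' j, ‖c j‖ = 0 := tendsto_nhds_unique h2 hconc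
    have h4 : ‖c j‖ ≤ 0 := by
      rw [← h3]
      exact Summable.le_tsum hc j (fun _ _ => norm_nonneg _)
    have h5 : ‖c j‖ = 0 := le_antisymm h4 (norm_nonneg _)
    exact norm_eq_zero.mp h5
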